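/- Let A be a finite type with |A| ≥ 3 and let n ≥ 2. For i ∈ {0,…,n−2} and a permutation π of A × A, let g(i,π) be the permutation of (Fin n → A) defined by g(i,π)(w)(j) = (π(w(i), w(i+1))).1 if j = i, g(i,π)(w)(j) = (π(w(i), w(i+1))).2 if j = i+1, and g(i,π)(w)(j) = w(j) otherwise. Then the subgroup of Perm(Fin n → A) generated by { g(i,π) : 0 ≤ i ≤ n−2, π an even permutation of A × A } equals the alternating group on (Fin n → A). -/

import Mathlib

open Function

/-- The shift map on `ℤ → A`. -/
def shiftMap (A : Type*) : (ℤ → A) → (ℤ → A) := fun x i => x (i + 1)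

/-- The shift map as a permutation of `ℤ → A`. -/
def shiftPerm (A : Type*) : Equiv.Perm (ℤ → A) where
  toFun := shiftMap A
  invFun x i := x (i - 1)
  left_inv x := funext fun i => by simp [shiftMap]
  right_inv x := funext fun i => by simp [shiftMap]

/-- Finite types carry the discrete topology. -/
instance fintypeDiscreteTopology (A : Type*) [Fintype A] : TopologicalSpace A := ⊥

/-- The automorphism group of the full shift `A^ℤ`: shift-commuting self-homeomorphisms of
`ℤ → A`, as a subgroup of the permutation group of `ℤ → A`. -/
def FullShiftAut (A : Type*) [Fintype A] : Subgroup (Equiv.Perm (ℤ → A)) where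
  carrier := { f | Continuous ⇑f ∧ Continuous ⇑f.symm ∧
      ∀ x, f (shiftMap A x) = shiftMap A (f x) }
  one_mem' := ⟨continuous_id, continuous_id, fun _ => rfl⟩
  mul_mem' := by
    rintro f g ⟨hf1, hf2, hf3⟩ ⟨hg1, hg2, hg3⟩
    refine ⟨?_, ?_, fun x => ?_⟩
    · exact hf1.comp hg1
    · exact hg2.comp hf2
    · show f (g (shiftMap A x)) = shiftMap A (f (g x))
      rw [hg3, hf3]
  inv_mem' := by
    rintro f ⟨hf1, hf2, hf3⟩
    refine ⟨hf2, hf1, fun x => ?_⟩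
    apply f.injective
    rw [Equiv.Perm.coe_inv, Equiv.apply_symm_apply, hf3, Equiv.apply_symm_apply]

/-- The symbol permutation determined by a permutation of the alphabet. -/
def symbolPerm {A : Type*} (π : Equiv.Perm A) : Equiv.Perm (ℤ → A) :=
  Equiv.piCongrRight fun _ => π

/-- The partial shift on the first track. -/
def partialShift₁ (B C : Type*) : Equiv.Perm (ℤ → B × C) where
  toFun x i := ((x (i + 1)).1, (x i).2)
  invFun x i := ((x (i - 1)).1, (x i).2)
  left_inv x := funext fun i => by simp
  right_inv x := funext fun i => by simp

/-- The partial shift on the second track. -/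
def partialShift₂ (B C : Type*) : Equiv.Perm (ℤ → B × C) where
  toFun x i := ((x i).1, (x (i + 1)).2)
  invFun x i := ((x i).1, (x (i - 1)).2)
  left_inv x := funext fun i => by simp
  right_inv x := funext fun i => by simp

/-- `PAut[B;C]`: the subgroup of the automorphism group of `(B × C)^ℤ` generated by the two
partial shifts and all symbol permutations. -/
def PAut (B C : Type*) : Subgroup (Equiv.Perm (ℤ → B × C)) :=
  Subgroup.closure
    ({partialShift₁ B C, partialShift₂ B C} ∪ Set.range (symbolPerm (A := B × C)))

open Equiv Equiv.Perm

theorem Equiv.apply_inv_self {α : Type*} (f : Perm α) (x : α) : f (f⁻¹ x) = x :=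
  f.apply_symm_apply x

theorem Equiv.inv_apply_self {α : Type*} (f : Perm α) (x : α) : f⁻¹ (f x) = x :=
  f.symm_apply_apply x

def permCongrMul {α β : Type*} (e : α ≃ β) : Perm α ≃* Perm β :=
  { Equiv.permCongr e with
    map_mul' := fun p q => Equiv.ext fun x => by simp [Equiv.permCongr_apply] }

@[simp] lemma permCongrMul_apply {α β : Type*} (e : α ≃ β) (p : Perm α) (x : β) :
    permCongrMul e p x = e (p (e.symm x)) := rfl

lemma permCongrMul_symm {α β : Type*} (e : α ≃ β) :
    (permCongrMul e).symm = permCongrMul e.symm := rfl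

theorem map_alternatingGroup {α β : Type*} [DecidableEq α] [Fintype α] [DecidableEq β] [Fintype β]
    (e : α ≃ β) :
    (alternatingGroup α).map (permCongrMul e).toMonoidHom = alternatingGroup β := by
  ext τ
  simp only [Subgroup.mem_map]
  constructor
  · rintro ⟨σ, hσ, rfl⟩
    rw [Equiv.Perm.mem_alternatingGroup] at hσ ⊢
    show Equiv.Perm.sign (e.permCongr σ) = 1
    rw [Equiv.Perm.sign_permCongr]; exact hσ
  · intro hτ
    refine ⟨e.symm.permCongr τ, ?_, ?_⟩
    · rw [Equiv.Perm.mem_alternatingGroup, Equiv.Perm.sign_permCongr]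
      exact Equiv.Perm.mem_alternatingGroup.mp hτ
    · exact Equiv.ext fun x => by simp [Equiv.permCongr_apply]

-- fresh element outside a finite set
lemma exists_fresh {X : Type*} [DecidableEq X] [Fintype X] (s : Finset X)
    (h : s.card < Fintype.card X) : ∃ u, u ∉ s := by
  by_contra hc
  push_neg at hc
  have : (Finset.univ : Finset X) ⊆ s := fun x _ => hc x
  have := Finset.card_le_card this
  simp [Finset.card_univ] at this
  omega

lemma exists_fresh2 {X : Type*} [DecidableEq X] [Fintype X] (s : Finset X)
    (h : s.card + 1 < Fintype.card X) : ∃ u v, u ∉ s ∧ v ∉ s ∧ u ≠ v := by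
  obtain ⟨u, hu⟩ := exists_fresh s (by omega)
  obtain ⟨v, hv⟩ := exists_fresh (insert u s) (by
    have := Finset.card_insert_le u s; omega)
  simp only [Finset.mem_insert, not_or] at hv
  exact ⟨u, v, hu, hv.2, fun h => hv.1 h.symm⟩

/-- prescribe an even permutation on three points -/
theorem alt3 {X : Type*} [DecidableEq X] [Fintype X] (h5 : 5 ≤ Fintype.card X)
    {a1 a2 a3 b1 b2 b3 : X} (ha12 : a1 ≠ a2) (ha13 : a1 ≠ a3) (ha23 : a2 ≠ a3)
    (hb12 : b1 ≠ b2) (hb13 : b1 ≠ b3) (hb23 : b2 ≠ b3) :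
    ∃ σ ∈ alternatingGroup X, σ a1 = b1 ∧ σ a2 = b2 ∧ σ a3 = b3 := by
  classical
  set s1 : Perm X := Equiv.swap a1 b1 with hs1
  set c2 : X := s1 a2 with hc2
  set s2 : Perm X := Equiv.swap c2 b2 with hs2
  set c3 : X := s2 (s1 a3) with hc3
  set s3 : Perm X := Equiv.swap c3 b3 with hs3
  set π : Perm X := s3 * s2 * s1 with hπ
  -- basic facts
  have hc2b1 : c2 ≠ b1 := by
    rw [hc2]
    intro h
    have : s1 a1 = b1 := Equiv.swap_apply_left _ _
    exact ha12 (s1.injective (by rw [h, this]))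
  have hc3b1 : c3 ≠ b1 := by
    have h1 : s2 b1 = b1 := Equiv.swap_apply_of_ne_of_ne (Ne.symm hc2b1) hb12
    intro h
    have : s1 a3 = b1 := s2.injective (by rw [← hc3, h, h1])
    have : s1 a3 = s1 a1 := by rw [this]; exact (Equiv.swap_apply_left _ _).symm
    exact ha13 (s1.injective this).symm
  have hc3b2 : c3 ≠ b2 := by
    intro h
    have h2 : s2 c2 = b2 := Equiv.swap_apply_left _ _
    have : s1 a3 = c2 := s2.injective (by rw [← hc3, h, h2])
    exact ha23 (s1.injective (by rw [this, hc2])).symm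
  -- evaluations
  have ev1 : π a1 = b1 := by
    show s3 (s2 (s1 a1)) = b1
    rw [hs1, Equiv.swap_apply_left]
    rw [hs2, Equiv.swap_apply_of_ne_of_ne (Ne.symm hc2b1) hb12]
    rw [hs3, Equiv.swap_apply_of_ne_of_ne (Ne.symm hc3b1) hb13]
  have ev2 : π a2 = b2 := by
    show s3 (s2 (s1 a2)) = b2
    rw [← hc2, hs2, Equiv.swap_apply_left]
    rw [hs3, Equiv.swap_apply_of_ne_of_ne (Ne.symm hc3b2) hb23]
  have ev3 : π a3 = b3 := by
    show s3 (s2 (s1 a3)) = b3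
    rw [← hc3, hs3, Equiv.swap_apply_left]
  -- parity fix
  rcases Int.units_eq_one_or (Equiv.Perm.sign π) with hsgn | hsgn
  · exact ⟨π, Equiv.Perm.mem_alternatingGroup.mpr hsgn, ev1, ev2, ev3⟩
  · obtain ⟨u, v, hu, hv, huv⟩ := exists_fresh2 ({a1, a2, a3} : Finset X)
      (by
        have : ({a1, a2, a3} : Finset X).card ≤ 3 := by
          apply le_trans (Finset.card_insert_le _ _)
          have := Finset.card_insert_le a2 ({a3} : Finset X)
          simp at this ⊢; omega
        omega)
    simp only [Finset.mem_insert, Finset.mem_singleton, not_or] at hu hv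
    refine ⟨π * Equiv.swap u v, ?_, ?_, ?_, ?_⟩
    · rw [Equiv.Perm.mem_alternatingGroup, map_mul, hsgn, Equiv.Perm.sign_swap huv]
      decide
    · rw [Equiv.Perm.mul_apply, Equiv.swap_apply_of_ne_of_ne (fun h => hu.1 h.symm) (fun h => hv.1 h.symm), ev1]
    · rw [Equiv.Perm.mul_apply, Equiv.swap_apply_of_ne_of_ne (fun h => hu.2.1 h.symm) (fun h => hv.2.1 h.symm), ev2]
    · rw [Equiv.Perm.mul_apply, Equiv.swap_apply_of_ne_of_ne (fun h => hu.2.2 h.symm) (fun h => hv.2.2 h.symm), ev3]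

lemma inv_fix {α : Type*} (e : Equiv.Perm α) {y : α} (h : e y = y) : e⁻¹ y = y :=
  Equiv.Perm.inv_eq_iff_eq.mpr h.symm

/-- If the supports of f and g meet in exactly the point x, the commutator is a 3-cycle. -/
theorem comm3 {α : Type*} [DecidableEq α] (f g : Perm α) (x : α)
    (hfx : f x ≠ x) (hgx : g x ≠ x)
    (huniq : ∀ z, f z ≠ z → g z ≠ z → z = x) :
    f * g * f⁻¹ * g⁻¹ = Equiv.swap x (g x) * Equiv.swap x (f x) := by
  have hax : f x ≠ x := hfx
  have hcx : g x ≠ x := hgx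
  have hfa : f (f x) ≠ f x := fun h => hax (f.injective h)
  have hga : g (f x) = f x := by
    by_contra h; exact hax (huniq (f x) hfa h)
  have hgc : g (g x) ≠ g x := fun h => hcx (g.injective h)
  have hfc : f (g x) = g x := by
    by_contra h; exact hcx (huniq (g x) h hgc)
  have hac : f x ≠ g x := by
    intro h; rw [h] at hfa; exact hfa hfc
  ext z
  simp only [Equiv.Perm.mul_apply]
  by_cases hzx : z = x
  · subst hzx
    have htx : g⁻¹ z ≠ z := fun h => hgx (by conv_lhs => rw [← h, g.apply_inv_self])
    have hgt : g (g⁻¹ z) ≠ g⁻¹ z := by rw [g.apply_inv_self]; exact Ne.symm htx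
    have hft : f (g⁻¹ z) = g⁻¹ z := by
      by_contra h; exact htx (huniq _ h hgt)
    rw [inv_fix f hft, g.apply_inv_self,
      Equiv.swap_apply_left, Equiv.swap_apply_of_ne_of_ne hax hac]
  · by_cases hza : z = f x
    · subst hza
      have h1 : g⁻¹ (f x) = f x := inv_fix g hga
      have h2 : f⁻¹ (f x) = x := f.inv_apply_self x
      rw [h1, h2, Equiv.swap_apply_right, Equiv.swap_apply_left]
      exact hfc
    · by_cases hzc : z = g x
      · subst hzc
        have h1 : g⁻¹ (g x) = x := g.inv_apply_self x
        have hsx : f⁻¹ x ≠ x := fun h => hfx (by conv_lhs => rw [← h, f.apply_inv_self])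
        have hfs : f (f⁻¹ x) ≠ f⁻¹ x := by rw [f.apply_inv_self]; exact Ne.symm hsx
        have hgs : g (f⁻¹ x) = f⁻¹ x := by
          by_contra h; exact hsx (huniq _ hfs h)
        rw [h1, hgs, f.apply_inv_self, Equiv.swap_apply_of_ne_of_ne hzx hza,
          Equiv.swap_apply_right]
      · rw [Equiv.swap_apply_of_ne_of_ne hzx hza, Equiv.swap_apply_of_ne_of_ne hzx hzc]
        by_cases hfz : f z = z
        · by_cases hgz : g z = z
          · rw [inv_fix g hgz, inv_fix f hfz, hgz, hfz]
          · have hu : g (g⁻¹ z) = z := g.apply_inv_self z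
            have huz : g⁻¹ z ≠ z := fun h => hgz (by conv_lhs => rw [← h, hu])
            have hux : g⁻¹ z ≠ x := fun h => hzc (by rw [← hu, h])
            have hgu : g (g⁻¹ z) ≠ g⁻¹ z := by rw [hu]; exact Ne.symm huz
            have hfu : f (g⁻¹ z) = g⁻¹ z := by
              by_contra h; exact hux (huniq _ h hgu)
            rw [inv_fix f hfu, hu, hfz]
        · have hgz : g z = z := by
            by_contra h; exact hzx (huniq z hfz h)
          have ht : f (f⁻¹ z) = z := f.apply_inv_self z
          have htz : f⁻¹ z ≠ z := fun h => hfz (by conv_lhs => rw [← h, ht])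
          have htx : f⁻¹ z ≠ x := fun h => hza (by rw [← ht, h])
          have hft : f (f⁻¹ z) ≠ f⁻¹ z := by rw [ht]; exact Ne.symm htz
          have hgt : g (f⁻¹ z) = f⁻¹ z := by
            by_contra h; exact htx (huniq _ hft h)
          rw [inv_fix g hgz, hgt, ht]

/-- every 3-cycle factors as two swaps through its orbit -/
theorem threeCycle_decomp {α : Type*} [DecidableEq α] [Fintype α] {σ : Perm α}
    (h : Equiv.Perm.IsThreeCycle σ) :
    ∃ p q r : α, p ≠ q ∧ p ≠ r ∧ q ≠ r ∧ σ = Equiv.swap p r * Equiv.swap p q := by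
  have hcard := h.card_support
  have hne : σ.support.Nonempty := Finset.card_pos.mp (by omega)
  obtain ⟨p, hp⟩ := hne
  have hp' : σ p ≠ p := Equiv.Perm.mem_support.mp hp
  set q := σ p with hq
  set r := σ q with hr
  have horder : σ ^ 3 = 1 := by
    rw [← h.orderOf]; exact pow_orderOf_eq_one σ
  have hcube : σ r = p := by
    have h3 : (σ ^ 3) p = p := by rw [horder]; rfl
    simpa [hr, hq, pow_succ, Equiv.Perm.mul_apply] using h3
  have hpq : p ≠ q := Ne.symm hp'
  have hqr : q ≠ r := by
    intro hh
    have : σ q ≠ q := Equiv.Perm.mem_support.mp (Equiv.Perm.apply_mem_support.mpr hp)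
    exact this hh.symm
  have hpr : p ≠ r := by
    intro hh
    rw [← hh] at hcube
    exact hp' hcube
  refine ⟨p, q, r, hpq, hpr, hqr, ?_⟩
  have hqs : q ∈ σ.support := Equiv.Perm.apply_mem_support.mpr hp
  have hrs : r ∈ σ.support := Equiv.Perm.apply_mem_support.mpr hqs
  have hsub : ({p, q, r} : Finset α) ⊆ σ.support := by
    intro z hz
    simp only [Finset.mem_insert, Finset.mem_singleton] at hz
    rcases hz with rfl | rfl | rfl
    exacts [hp, hqs, hrs]
  have hcard3 : ({p, q, r} : Finset α).card = 3 := by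
    rw [Finset.card_insert_of_notMem (by simp [hpq, hpr]),
      Finset.card_insert_of_notMem (by simp [hqr])]
    rfl
  have hsupp : σ.support = {p, q, r} :=
    (Finset.eq_of_subset_of_card_le hsub (by rw [hcard, hcard3])).symm
  ext z
  by_cases hz : z ∈ ({p, q, r} : Finset α)
  · simp only [Finset.mem_insert, Finset.mem_singleton] at hz
    rcases hz with rfl | rfl | rfl
    · rw [Equiv.Perm.mul_apply, Equiv.swap_apply_left,
        Equiv.swap_apply_of_ne_of_ne hpq.symm hqr, ← hq]
    · rw [Equiv.Perm.mul_apply, Equiv.swap_apply_right, Equiv.swap_apply_left, ← hr]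
    · rw [Equiv.Perm.mul_apply, Equiv.swap_apply_of_ne_of_ne hpr.symm hqr.symm,
        Equiv.swap_apply_right, hcube]
  · have hz' : z ∉ σ.support := by rw [hsupp]; exact hz
    rw [Equiv.Perm.notMem_support.mp hz']
    simp only [Finset.mem_insert, Finset.mem_singleton, not_or] at hz
    rw [Equiv.Perm.mul_apply, Equiv.swap_apply_of_ne_of_ne hz.1 hz.2.1,
      Equiv.swap_apply_of_ne_of_ne hz.1 hz.2.2]

/-- prescribe an even permutation on two points -/
theorem alt2 {X : Type*} [DecidableEq X] [Fintype X] (h5 : 5 ≤ Fintype.card X)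
    {a1 a2 b1 b2 : X} (ha : a1 ≠ a2) (hb : b1 ≠ b2) :
    ∃ σ ∈ alternatingGroup X, σ a1 = b1 ∧ σ a2 = b2 := by
  obtain ⟨a3, ha3⟩ := exists_fresh ({a1, a2} : Finset X) (by
    have : ({a1, a2} : Finset X).card ≤ 2 := le_trans (Finset.card_insert_le _ _) (by simp)
    omega)
  obtain ⟨b3, hb3⟩ := exists_fresh ({b1, b2} : Finset X) (by
    have : ({b1, b2} : Finset X).card ≤ 2 := le_trans (Finset.card_insert_le _ _) (by simp)
    omega)
  simp only [Finset.mem_insert, Finset.mem_singleton, not_or] at ha3 hb3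
  obtain ⟨σ, hσ, h1, h2, _⟩ := alt3 h5 ha (fun h => ha3.1 h.symm) (fun h => ha3.2 h.symm)
    hb (fun h => hb3.1 h.symm) (fun h => hb3.2 h.symm)
  exact ⟨σ, hσ, h1, h2⟩

section Key
variable {Y B C : Type*} [Fintype Y] [DecidableEq Y] [Fintype B] [DecidableEq B]
  [Fintype C] [DecidableEq C]

/-- the permutation acting on the (B,C) coordinates of (Y × B) × C -/
def Tp (τ : Perm (B × C)) : Perm ((Y × B) × C) :=
  Equiv.permCongr (Equiv.prodAssoc Y B C).symm ((Equiv.refl Y).prodCongr τ)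

@[simp] lemma Tp_apply (τ : Perm (B × C)) (z : (Y × B) × C) :
    Tp τ z = ((z.1.1, (τ (z.1.2, z.2)).1), (τ (z.1.2, z.2)).2) := rfl

@[simp] lemma Fp_apply (σ : Perm (Y × B)) (z : (Y × B) × C) :
    (σ.prodCongr (Equiv.refl C)) z = (σ z.1, z.2) := rfl

theorem key (hY : 1 < Fintype.card Y) (hB : 2 < Fintype.card B) (hC : 1 < Fintype.card C)
    (G : Subgroup (Perm ((Y × B) × C)))
    (hF : ∀ σ ∈ alternatingGroup (Y × B), σ.prodCongr (Equiv.refl C) ∈ G)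
    (hT : ∀ τ ∈ alternatingGroup (B × C), (Tp τ : Perm ((Y × B) × C)) ∈ G) :
    alternatingGroup ((Y × B) × C) ≤ G := by
  classical
  have hcardYB : 5 ≤ Fintype.card (Y × B) := by
    rw [Fintype.card_prod]; nlinarith
  have hcardBC : 5 ≤ Fintype.card (B × C) := by
    rw [Fintype.card_prod]; nlinarith
  obtain ⟨y1, y2, hy12⟩ := Fintype.exists_pair_of_one_lt_card hY
  obtain ⟨b1, b2, hb12⟩ := Fintype.exists_pair_of_one_lt_card (lt_trans one_lt_two hB)
  obtain ⟨b3, hb3⟩ := exists_fresh ({b1, b2} : Finset B) (by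
    have : ({b1, b2} : Finset B).card ≤ 2 := le_trans (Finset.card_insert_le _ _) (by simp)
    omega)
  simp only [Finset.mem_insert, Finset.mem_singleton, not_or] at hb3
  have hb13 : b1 ≠ b3 := fun h => hb3.1 h.symm
  have hb23 : b2 ≠ b3 := fun h => hb3.2 h.symm
  obtain ⟨c1, c2, hc12⟩ := Fintype.exists_pair_of_one_lt_card hC
  set K1 : (Y × B) × C := ((y1, b1), c1) with hK1
  set K2 : (Y × B) × C := ((y1, b2), c1) with hK2
  set K3 : (Y × B) × C := ((y1, b3), c1) with hK3
  -- map any distinct triple onto (K1, K2, K3) by an element of G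
  have trans3 : ∀ p1 p2 p3 : (Y × B) × C, p1 ≠ p2 → p1 ≠ p3 → p2 ≠ p3 →
      ∃ g ∈ G, g p1 = K1 ∧ g p2 = K2 ∧ g p3 = K3 := by
    intro p1 p2 p3 h12 h13 h23
    have hYne : ∀ pa pb : (Y × B) × C, pa ≠ pb → ((pa.1.2 : B), (pa.2 : C)) = (pb.1.2, pb.2) →
        pa.1.1 ≠ pb.1.1 := by
      rintro ⟨⟨ya, ba⟩, ca⟩ ⟨⟨yb, bb⟩, cb⟩ hne heq hy
      simp only [Prod.mk.injEq] at heq hy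
      exact hne (by simp [Prod.ext_iff, hy, heq.1, heq.2])
    have stage0 : ∃ g0 ∈ G, (g0 p1).1 ≠ (g0 p2).1 ∧ (g0 p1).1 ≠ (g0 p3).1 ∧
        (g0 p2).1 ≠ (g0 p3).1 := by
      by_cases e12 : ((p1.1.2 : B), (p1.2 : C)) = (p2.1.2, p2.2) <;>
      by_cases e13 : ((p1.1.2 : B), (p1.2 : C)) = (p3.1.2, p3.2)
      · -- all equal
        refine ⟨1, one_mem G, ?_, ?_, ?_⟩ <;> simp only [Equiv.Perm.one_apply]
        · exact fun h => hYne p1 p2 h12 e12 (congrArg Prod.fst h)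
        · exact fun h => hYne p1 p3 h13 e13 (congrArg Prod.fst h)
        · exact fun h => hYne p2 p3 h23 (e12 ▸ e13) (congrArg Prod.fst h)
      · -- r1 = r2 ≠ r3
        obtain ⟨τ, hτ, hτ1, hτ3⟩ := alt2 hcardBC e13
          (show ((b1, c1) : B × C) ≠ (b2, c1) by simp [hb12])
        have hτ2 : τ (p2.1.2, p2.2) = (b1, c1) := by rw [← e12]; exact hτ1
        refine ⟨Tp τ, hT τ hτ, ?_, ?_, ?_⟩ <;> simp only [Tp_apply, hτ1, hτ2, hτ3]
        · intro h; simp only [Prod.mk.injEq] at h; exact hYne p1 p2 h12 e12 h.1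
        · exact fun h => hb12 (congrArg Prod.snd h)
        · exact fun h => hb12 (congrArg Prod.snd h)
      · -- r1 = r3 ≠ r2
        obtain ⟨τ, hτ, hτ1, hτ2⟩ := alt2 hcardBC (fun h => e12 h)
          (show ((b1, c1) : B × C) ≠ (b2, c1) by simp [hb12])
        have hτ3 : τ (p3.1.2, p3.2) = (b1, c1) := by rw [← e13]; exact hτ1
        refine ⟨Tp τ, hT τ hτ, ?_, ?_, ?_⟩ <;> simp only [Tp_apply, hτ1, hτ2, hτ3]
        · exact fun h => hb12 (congrArg Prod.snd h)
        · intro h; simp only [Prod.mk.injEq] at h; exact hYne p1 p3 h13 e13 h.1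
        · exact fun h => hb12 (congrArg Prod.snd h).symm
      · by_cases e23 : ((p2.1.2 : B), (p2.2 : C)) = (p3.1.2, p3.2)
        · -- r2 = r3, r1 different
          obtain ⟨τ, hτ, hτ1, hτ2⟩ := alt2 hcardBC (fun h => e12 h)
            (show ((b1, c1) : B × C) ≠ (b2, c1) by simp [hb12])
          have hτ3 : τ (p3.1.2, p3.2) = (b2, c1) := by rw [← e23]; exact hτ2
          refine ⟨Tp τ, hT τ hτ, ?_, ?_, ?_⟩ <;> simp only [Tp_apply, hτ1, hτ2, hτ3]
          · exact fun h => hb12 (congrArg Prod.snd h)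
          · exact fun h => hb12 (congrArg Prod.snd h)
          · intro h; simp only [Prod.mk.injEq] at h; exact hYne p2 p3 h23 e23 h.1
        · -- all r's distinct
          obtain ⟨τ, hτ, hτ1, hτ2, hτ3⟩ := alt3 hcardBC (fun h => e12 h) (fun h => e13 h)
            (fun h => e23 h)
            (show ((b1, c1) : B × C) ≠ (b2, c1) by simp [hb12])
            (show ((b1, c1) : B × C) ≠ (b3, c1) by simp [hb13])
            (show ((b2, c1) : B × C) ≠ (b3, c1) by simp [hb23])
          refine ⟨Tp τ, hT τ hτ, ?_, ?_, ?_⟩ <;> simp only [Tp_apply, hτ1, hτ2, hτ3]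
          · exact fun h => hb12 (congrArg Prod.snd h)
          · exact fun h => hb13 (congrArg Prod.snd h)
          · exact fun h => hb23 (congrArg Prod.snd h)
    obtain ⟨g0, hg0G, hq12, hq13, hq23⟩ := stage0
    -- stage 1 : send the first components to (y1, b1), (y1, b2), (y1, b3)
    obtain ⟨σ, hσA, hσ1, hσ2, hσ3⟩ := alt3 hcardYB hq12 hq13 hq23
      (show ((y1, b1) : Y × B) ≠ (y1, b2) by simp [hb12])
      (show ((y1, b1) : Y × B) ≠ (y1, b3) by simp [hb13])
      (show ((y1, b2) : Y × B) ≠ (y1, b3) by simp [hb23])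
    -- stage 2 : normalize the C components
    obtain ⟨τ, hτA, hτ1, hτ2, hτ3⟩ := alt3 hcardBC
      (show ((b1, (g0 p1).2) : B × C) ≠ (b2, (g0 p2).2) by
        intro h; simp only [Prod.mk.injEq] at h; exact hb12 h.1)
      (show ((b1, (g0 p1).2) : B × C) ≠ (b3, (g0 p3).2) by
        intro h; simp only [Prod.mk.injEq] at h; exact hb13 h.1)
      (show ((b2, (g0 p2).2) : B × C) ≠ (b3, (g0 p3).2) by
        intro h; simp only [Prod.mk.injEq] at h; exact hb23 h.1)
      (show ((b1, c1) : B × C) ≠ (b2, c1) by simp [hb12])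
      (show ((b1, c1) : B × C) ≠ (b3, c1) by simp [hb13])
      (show ((b2, c1) : B × C) ≠ (b3, c1) by simp [hb23])
    refine ⟨Tp τ * σ.prodCongr (Equiv.refl C) * g0,
      mul_mem (mul_mem (hT τ hτA) (hF σ hσA)) hg0G, ?_, ?_, ?_⟩ <;>
      simp [Equiv.Perm.mul_apply, hσ1, hσ2, hσ3, hτ1, hτ2, hτ3, hK1, hK2, hK3]
  -- construct one explicit 3-cycle in G as a commutator
  set σ0 : Perm (Y × B) := Equiv.swap (y1, b1) (y1, b2) * Equiv.swap (y1, b1) (y2, b1) with hσ0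
  set τ0 : Perm (B × C) := Equiv.swap (b2, c1) (b3, c2) * Equiv.swap (b2, c1) (b3, c1) with hτ0
  have hpq0 : ((y1, b1) : Y × B) ≠ (y2, b1) := by simp [hy12]
  have hps0 : ((y1, b1) : Y × B) ≠ (y1, b2) := by simp [hb12]
  have huv0 : ((b2, c1) : B × C) ≠ (b3, c1) := by simp [hb23]
  have huw0 : ((b2, c1) : B × C) ≠ (b3, c2) := by simp [hb23]
  have hvw0 : ((b3, c1) : B × C) ≠ (b3, c2) := by simp [hc12]
  have hσ0A : σ0 ∈ alternatingGroup (Y × B) := by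
    rw [Equiv.Perm.mem_alternatingGroup, hσ0, map_mul,
      Equiv.Perm.sign_swap hps0, Equiv.Perm.sign_swap hpq0]
    decide
  have hτ0A : τ0 ∈ alternatingGroup (B × C) := by
    rw [Equiv.Perm.mem_alternatingGroup, hτ0, map_mul,
      Equiv.Perm.sign_swap huw0, Equiv.Perm.sign_swap huv0]
    decide
  set f : Perm ((Y × B) × C) := σ0.prodCongr (Equiv.refl C) with hf
  set gg : Perm ((Y × B) × C) := Tp τ0 with hgg
  have hfG : f ∈ G := hF σ0 hσ0A
  have hggG : gg ∈ G := hT τ0 hτ0A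
  have hσ0x : σ0 (y1, b2) = (y1, b1) := by
    rw [hσ0, Equiv.Perm.mul_apply,
      Equiv.swap_apply_of_ne_of_ne (Ne.symm hps0) (by simp [hy12]),
      Equiv.swap_apply_right]
  have hτ0x : τ0 (b2, c1) = (b3, c1) := by
    rw [hτ0, Equiv.Perm.mul_apply, Equiv.swap_apply_left,
      Equiv.swap_apply_of_ne_of_ne (Ne.symm huv0) hvw0]
  have hfxval : f K2 = K1 := by
    simp only [hf, Fp_apply, hK2, hK1, hσ0x]
  have hggxval : gg K2 = K3 := by
    simp only [hgg, Tp_apply, hK2, hK3, hτ0x]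
  have hfx : f K2 ≠ K2 := by rw [hfxval, hK1, hK2]; simp [Prod.ext_iff, hb12]
  have hggx : gg K2 ≠ K2 := by rw [hggxval, hK3, hK2]; simp [Prod.ext_iff, hb3.2]
  have huniq : ∀ z, f z ≠ z → gg z ≠ z → z = K2 := by
    rintro ⟨⟨yz, bz⟩, cz⟩ hfz hgz
    have hσ0z : σ0 (yz, bz) ≠ (yz, bz) := by
      intro h; apply hfz; simp only [hf, Fp_apply, h]
    have hτ0z : τ0 (bz, cz) ≠ (bz, cz) := by
      intro h; apply hgz; simp only [hgg, Tp_apply, h]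
    -- membership of (yz,bz) in {(y1,b1),(y2,b1),(y1,b2)}
    have hmem1 : (yz, bz) = (y1, b1) ∨ (yz, bz) = (y2, b1) ∨ (yz, bz) = (y1, b2) := by
      by_contra hcon
      push_neg at hcon
      apply hσ0z
      rw [hσ0, Equiv.Perm.mul_apply,
        Equiv.swap_apply_of_ne_of_ne hcon.1 hcon.2.1,
        Equiv.swap_apply_of_ne_of_ne hcon.1 hcon.2.2]
    have hmem2 : (bz, cz) = (b2, c1) ∨ (bz, cz) = (b3, c1) ∨ (bz, cz) = (b3, c2) := by
      by_contra hcon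
      push_neg at hcon
      apply hτ0z
      rw [hτ0, Equiv.Perm.mul_apply,
        Equiv.swap_apply_of_ne_of_ne hcon.1 hcon.2.1,
        Equiv.swap_apply_of_ne_of_ne hcon.1 hcon.2.2]
    have hbz2 : bz = b2 ∨ bz = b3 := by
      rcases hmem2 with h | h | h <;> simp only [Prod.mk.injEq] at h
      · exact Or.inl h.1
      · exact Or.inr h.1
      · exact Or.inr h.1
    rcases hmem1 with h | h | h <;> simp only [Prod.mk.injEq] at h
    · exfalso; rcases hbz2 with hb | hb
      · exact hb12 (h.2 ▸ hb ▸ rfl)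
      · exact hb13 (h.2 ▸ hb ▸ rfl)
    · exfalso; rcases hbz2 with hb | hb
      · exact hb12 (h.2 ▸ hb ▸ rfl)
      · exact hb13 (h.2 ▸ hb ▸ rfl)
    · -- bz = b2, so (bz,cz) = (b2,c1)
      have hcz : cz = c1 := by
        rcases hmem2 with h2 | h2 | h2 <;> simp only [Prod.mk.injEq] at h2
        · exact h2.2
        · exact absurd (h.2 ▸ h2.1) hb23
        · exact absurd (h.2 ▸ h2.1) hb23
      rw [hK2, h.1, h.2, hcz]
  have hcomm : f * gg * f⁻¹ * gg⁻¹ = Equiv.swap K2 K3 * Equiv.swap K2 K1 := by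
    rw [comm3 f gg K2 hfx hggx huniq, hggxval, hfxval]
  have ht0G : Equiv.swap K2 K3 * Equiv.swap K2 K1 ∈ G := by
    rw [← hcomm]
    exact mul_mem (mul_mem (mul_mem hfG hggG) (inv_mem hfG)) (inv_mem hggG)
  -- now any three-cycle is in G
  rw [← closure_three_cycles_eq_alternating]
  refine (Subgroup.closure_le G).mpr ?_
  rintro σ hσ3c
  obtain ⟨p, q, r, hpq, hpr, hqr, hdecomp⟩ := threeCycle_decomp hσ3c
  obtain ⟨g', hg'G, hg'q, hg'p, hg'r⟩ := trans3 q p r (Ne.symm hpq) hqr hpr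
  have h1 : g'⁻¹ K1 = q := by rw [← hg'q, g'.inv_apply_self]
  have h2 : g'⁻¹ K2 = p := by rw [← hg'p, g'.inv_apply_self]
  have h3 : g'⁻¹ K3 = r := by rw [← hg'r, g'.inv_apply_self]
  have : σ = g'⁻¹ * (Equiv.swap K2 K3 * Equiv.swap K2 K1) * g' := by
    rw [hdecomp, ← h1, ← h2, ← h3,
      Equiv.swap_apply_apply g'⁻¹ K2 K3, Equiv.swap_apply_apply g'⁻¹ K2 K1]
    group
  rw [this]
  exact mul_mem (mul_mem (inv_mem hg'G) ht0G) hg'G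
end Key

section Windows
variable {A : Type} [Fintype A] [DecidableEq A]

def windowFun (n i : ℕ) (hi : i + 1 < n) (π : Perm (A × A)) (w : Fin n → A) : Fin n → A :=
  fun j => if (j : ℕ) = i then (π (w ⟨i, by omega⟩, w ⟨i + 1, hi⟩)).1
    else if (j : ℕ) = i + 1 then (π (w ⟨i, by omega⟩, w ⟨i + 1, hi⟩)).2
    else w j

lemma windowFun_at_i (n i : ℕ) (hi : i + 1 < n) (π : Perm (A × A)) (w : Fin n → A) :
    windowFun n i hi π w ⟨i, by omega⟩ = (π (w ⟨i, by omega⟩, w ⟨i + 1, hi⟩)).1 :=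
  if_pos rfl

lemma windowFun_at_i1 (n i : ℕ) (hi : i + 1 < n) (π : Perm (A × A)) (w : Fin n → A) :
    windowFun n i hi π w ⟨i + 1, hi⟩ = (π (w ⟨i, by omega⟩, w ⟨i + 1, hi⟩)).2 := by
  unfold windowFun
  rw [if_neg (by simp), if_pos rfl]

lemma windowFun_at_other (n i : ℕ) (hi : i + 1 < n) (π : Perm (A × A)) (w : Fin n → A)
    (j : Fin n) (h1 : (j : ℕ) ≠ i) (h2 : (j : ℕ) ≠ i + 1) :
    windowFun n i hi π w j = w j := by
  unfold windowFun
  rw [if_neg h1, if_neg h2]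

lemma windowFun_pair (n i : ℕ) (hi : i + 1 < n) (π : Perm (A × A)) (w : Fin n → A) :
    (windowFun n i hi π w ⟨i, by omega⟩, windowFun n i hi π w ⟨i + 1, hi⟩) =
      π (w ⟨i, by omega⟩, w ⟨i + 1, hi⟩) := by
  rw [windowFun_at_i, windowFun_at_i1]

lemma windowFun_comp (n i : ℕ) (hi : i + 1 < n) (π ρ : Perm (A × A)) (w : Fin n → A) :
    windowFun n i hi π (windowFun n i hi ρ w) = windowFun n i hi (π * ρ) w := by
  funext j
  by_cases h1 : (j : ℕ) = i
  · have hj : j = ⟨i, by omega⟩ := Fin.ext h1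
    rw [hj]
    rw [windowFun_at_i n i hi π (windowFun n i hi ρ w), windowFun_at_i n i hi (π * ρ) w,
      windowFun_pair, Equiv.Perm.mul_apply]
  · by_cases h2 : (j : ℕ) = i + 1
    · have hj : j = ⟨i + 1, hi⟩ := Fin.ext h2
      rw [hj]
      rw [windowFun_at_i1 n i hi π (windowFun n i hi ρ w), windowFun_at_i1 n i hi (π * ρ) w,
        windowFun_pair, Equiv.Perm.mul_apply]
    · rw [windowFun_at_other n i hi π _ j h1 h2, windowFun_at_other n i hi ρ w j h1 h2,
        windowFun_at_other n i hi _ w j h1 h2]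

lemma windowFun_one (n i : ℕ) (hi : i + 1 < n) (w : Fin n → A) :
    windowFun n i hi 1 w = w := by
  funext j
  by_cases h1 : (j : ℕ) = i
  · have hj : j = ⟨i, by omega⟩ := Fin.ext h1
    rw [hj]
    rw [windowFun_at_i, Equiv.Perm.one_apply]
  · by_cases h2 : (j : ℕ) = i + 1
    · have hj : j = ⟨i + 1, hi⟩ := Fin.ext h2
      rw [hj]
      rw [windowFun_at_i1, Equiv.Perm.one_apply]
    · exact windowFun_at_other n i hi 1 w j h1 h2

def window (n i : ℕ) (hi : i + 1 < n) (π : Perm (A × A)) : Perm (Fin n → A) where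
  toFun := windowFun n i hi π
  invFun := windowFun n i hi π⁻¹
  left_inv w := by rw [windowFun_comp, inv_mul_cancel, windowFun_one]
  right_inv w := by rw [windowFun_comp, mul_inv_cancel, windowFun_one]

@[simp] lemma window_apply (n i : ℕ) (hi : i + 1 < n) (π : Perm (A × A)) (w : Fin n → A) :
    window n i hi π w = windowFun n i hi π w := rfl

lemma window_mul (n i : ℕ) (hi : i + 1 < n) (π ρ : Perm (A × A)) :
    window n i hi π * window n i hi ρ = window n i hi (π * ρ) :=
  Equiv.ext fun w => windowFun_comp n i hi π ρ w

def windowHom (n i : ℕ) (hi : i + 1 < n) : Perm (A × A) →* Perm (Fin n → A) :=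
  MonoidHom.mk' (fun π => window n i hi π) (fun π ρ => (window_mul n i hi π ρ).symm)

lemma window_even (n i : ℕ) (hi : i + 1 < n) {π : Perm (A × A)}
    (hπ : π ∈ alternatingGroup (A × A)) :
    window n i hi π ∈ alternatingGroup (Fin n → A) := by
  rw [Equiv.Perm.mem_alternatingGroup]
  have hker : alternatingGroup (A × A) ≤
      ((Equiv.Perm.sign).comp (windowHom (A := A) n i hi)).ker := by
    rw [← closure_three_cycles_eq_alternating]
    refine (Subgroup.closure_le _).mpr ?_
    intro τ hτ
    have h3 : τ ^ 3 = 1 := by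
      rw [← Equiv.Perm.IsThreeCycle.orderOf hτ]
      exact pow_orderOf_eq_one τ
    have hx : ((Equiv.Perm.sign).comp (windowHom (A := A) n i hi)) τ ^ 3 = 1 := by
      rw [← map_pow, h3, map_one]
    rcases Int.units_eq_one_or (((Equiv.Perm.sign).comp (windowHom (A := A) n i hi)) τ) with
      h | h
    · exact h
    · rw [h] at hx; exact absurd hx (by decide)
  exact hker hπ
end Windows
section SP
variable {A : Type} [Fintype A] [DecidableEq A]

/-- split off the last coordinate -/
def SP (A : Type) (k : ℕ) : (Fin (k + 1) → A) ≃ (Fin k → A) × A where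
  toFun w := (w ∘ Fin.castSucc, w (Fin.last k))
  invFun p := Fin.snoc p.1 p.2
  left_inv w := Fin.snoc_init_self w
  right_inv p := by
    refine Prod.ext ?_ ?_
    · funext j; simp [Fin.snoc_castSucc]
    · simp [Fin.snoc_last]

@[simp] lemma SP_apply (k : ℕ) (w : Fin (k + 1) → A) :
    SP A k w = (w ∘ Fin.castSucc, w (Fin.last k)) := rfl

@[simp] lemma SP_symm_apply (k : ℕ) (p : (Fin k → A) × A) :
    (SP A k).symm p = Fin.snoc p.1 p.2 := rfl

def liftPerm (k : ℕ) : Perm (Fin k → A) →* Perm (Fin (k + 1) → A) :=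
  MonoidHom.mk' (fun σ => (permCongrMul (SP A k).symm) (σ.prodCongr (Equiv.refl A)))
    (fun σ ρ => by
      rw [show (σ * ρ).prodCongr (Equiv.refl A) =
        σ.prodCongr (Equiv.refl A) * ρ.prodCongr (Equiv.refl A) from Equiv.ext fun z => rfl]
      exact map_mul _ _ _)

lemma windowFun_lift (k i : ℕ) (hi : i + 1 < k) (π : Perm (A × A)) (w : Fin (k + 1) → A) :
    Fin.snoc (windowFun k i hi π (w ∘ Fin.castSucc)) (w (Fin.last k)) =
      windowFun (k + 1) i (by omega) π w := by
  funext j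
  induction j using Fin.lastCases with
  | last =>
    rw [Fin.snoc_last, windowFun_at_other (k+1) i (by omega) π w (Fin.last k)
      (by simp [Fin.last]; omega) (by simp [Fin.last]; omega)]
  | cast jj =>
    rw [Fin.snoc_castSucc]
    by_cases h1 : (jj : ℕ) = i
    · have hj : jj = ⟨i, by omega⟩ := Fin.ext h1
      rw [hj, windowFun_at_i k i hi π]
      have hcs : Fin.castSucc (⟨i, by omega⟩ : Fin k) = (⟨i, by omega⟩ : Fin (k+1)) := rfl
      rw [hcs, windowFun_at_i (k+1) i (by omega) π w]
      rfl
    · by_cases h2 : (jj : ℕ) = i + 1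
      · have hj : jj = ⟨i + 1, hi⟩ := Fin.ext h2
        rw [hj, windowFun_at_i1 k i hi π]
        have hcs : Fin.castSucc (⟨i + 1, hi⟩ : Fin k) = (⟨i + 1, by omega⟩ : Fin (k+1)) := rfl
        rw [hcs, windowFun_at_i1 (k+1) i (by omega) π w]
        rfl
      · rw [windowFun_at_other k i hi π _ jj h1 h2,
          windowFun_at_other (k+1) i (by omega) π w (Fin.castSucc jj)
            (by simpa using h1) (by simpa using h2)]
        rfl

lemma liftPerm_window (k i : ℕ) (hi : i + 1 < k) (π : Perm (A × A)) :
    liftPerm k (window k i hi π) = window (k + 1) i (by omega) π := by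
  apply Equiv.ext
  intro w
  show Fin.snoc (windowFun k i hi π (w ∘ Fin.castSucc)) (w (Fin.last k)) =
    windowFun (k + 1) i (by omega) π w
  exact windowFun_lift k i hi π w
end SP
section Main
variable {A : Type} [Fintype A] [DecidableEq A]

def E3 (A : Type) (m : ℕ) : (Fin (m + 3) → A) ≃ ((Fin (m + 1) → A) × A) × A :=
  (SP A (m + 2)).trans ((SP A (m + 1)).prodCongr (Equiv.refl A))

lemma windowTop (m : ℕ) (τ : Perm (A × A)) :
    permCongrMul (E3 A m) (window (m + 3) (m + 1) (by omega) τ) = Tp τ := by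
  apply Equiv.ext
  intro z
  show E3 A m (windowFun (m + 3) (m + 1) (by omega) τ
      (Fin.snoc (Fin.snoc z.1.1 z.1.2) z.2)) = Tp τ z
  set w : Fin (m + 3) → A := Fin.snoc (Fin.snoc z.1.1 z.1.2) z.2 with hw
  have hw1 : w ⟨m + 1, by omega⟩ = z.1.2 := by
    have h : (⟨m + 1, by omega⟩ : Fin (m + 3)) = Fin.castSucc (Fin.last (m + 1)) := rfl
    rw [h, hw, Fin.snoc_castSucc, Fin.snoc_last]
  have hw2 : w ⟨m + 1 + 1, by omega⟩ = z.2 := by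
    have h : (⟨m + 1 + 1, by omega⟩ : Fin (m + 3)) = Fin.last (m + 2) := rfl
    rw [h, hw, Fin.snoc_last]
  set w' : Fin (m + 3) → A := windowFun (m + 3) (m + 1) (by omega) τ w with hw'
  have g2 : w' (Fin.castSucc (Fin.last (m + 1))) = (τ (z.1.2, z.2)).1 := by
    have h : Fin.castSucc (Fin.last (m + 1)) = (⟨m + 1, by omega⟩ : Fin (m + 3)) := rfl
    rw [h, hw', windowFun_at_i (m + 3) (m + 1) (by omega) τ w, hw1, hw2]
  have g3 : w' (Fin.last (m + 2)) = (τ (z.1.2, z.2)).2 := by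
    have h : Fin.last (m + 2) = (⟨m + 1 + 1, by omega⟩ : Fin (m + 3)) := rfl
    rw [h, hw', windowFun_at_i1 (m + 3) (m + 1) (by omega) τ w, hw1, hw2]
  have g1 : ∀ j : Fin (m + 1), w' (Fin.castSucc (Fin.castSucc j)) = z.1.1 j := by
    intro j
    have hjlt := j.isLt
    rw [hw', windowFun_at_other (m + 3) (m + 1) (by omega) τ w
      (Fin.castSucc (Fin.castSucc j))
      (by simp only [Fin.coe_castSucc]; omega) (by simp only [Fin.coe_castSucc]; omega)]
    rw [hw, Fin.snoc_castSucc, Fin.snoc_castSucc]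
  refine Prod.ext (Prod.ext ?_ ?_) ?_
  · funext j
    exact g1 j
  · exact g2
  · exact g3

lemma window_two (h2 : 0 + 1 < 2) (π : Perm (A × A)) :
    window 2 0 h2 π = permCongrMul (finTwoArrowEquiv A).symm π := by
  apply Equiv.ext
  intro w
  funext j
  show windowFun 2 0 h2 π w j = (finTwoArrowEquiv A).symm (π (finTwoArrowEquiv A w)) j
  fin_cases j
  · rw [show (⟨0, by omega⟩ : Fin 2) = ⟨0, by omega⟩ from rfl]
    rw [windowFun_at_i 2 0 h2 π w]
    simp [finTwoArrowEquiv]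
  · rw [show (⟨1, by omega⟩ : Fin 2) = ⟨0 + 1, h2⟩ from rfl]
    rw [windowFun_at_i1 2 0 h2 π w]
    simp [finTwoArrowEquiv]
def Wset (A : Type) [Fintype A] [DecidableEq A] (n : ℕ) : Set (Perm (Fin n → A)) :=
  {p | ∃ (i : ℕ) (hi : i + 1 < n) (π : Perm (A × A)),
    π ∈ alternatingGroup (A × A) ∧ p = window n i hi π}

lemma closure_Wset_le (n : ℕ) :
    Subgroup.closure (Wset A n) ≤ alternatingGroup (Fin n → A) := by
  refine (Subgroup.closure_le _).mpr ?_
  rintro p ⟨i, hi, π, hπ, rfl⟩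
  exact window_even n i hi hπ

@[simp] lemma liftPerm_apply (k : ℕ) (σ : Perm (Fin k → A)) :
    liftPerm k σ = permCongrMul (SP A k).symm (σ.prodCongr (Equiv.refl A)) := rfl

theorem CT (hA : 3 ≤ Fintype.card A) :
    ∀ m : ℕ, Subgroup.closure (Wset A (m + 2)) = alternatingGroup (Fin (m + 2) → A) := by
  intro m
  induction m with
  | zero =>
    refine le_antisymm (closure_Wset_le 2) ?_
    have hset : Wset A 2 =
        ⇑(permCongrMul (finTwoArrowEquiv A).symm).toMonoidHom ''
          ↑(alternatingGroup (A × A)) := by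
      ext p
      constructor
      · rintro ⟨i, hi, π, hπ, rfl⟩
        have hi0 : i = 0 := by omega
        subst hi0
        exact ⟨π, hπ, (window_two hi π).symm⟩
      · rintro ⟨π, hπ, rfl⟩
        exact ⟨0, by omega, π, hπ, (window_two (by omega) π).symm⟩
    rw [hset, ← MonoidHom.map_closure, Subgroup.closure_eq, map_alternatingGroup]
  | succ m IH =>
    refine le_antisymm (closure_Wset_le (m + 3)) ?_
    set G := Subgroup.closure (Wset A (m + 3)) with hG
    set M := permCongrMul (E3 A m) with hM
    have hY : 1 < Fintype.card (Fin (m + 1) → A) := by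
      rw [Fintype.card_fun, Fintype.card_fin]
      exact Nat.one_lt_pow (by omega) (by omega)
    have hF : ∀ σ ∈ alternatingGroup ((Fin (m + 1) → A) × A),
        σ.prodCongr (Equiv.refl A) ∈ G.map M.toMonoidHom := by
      intro σ hσ
      set ρ : Perm (Fin (m + 2) → A) := permCongrMul (SP A (m + 1)).symm σ with hρ
      have hρA : ρ ∈ alternatingGroup (Fin (m + 2) → A) := by
        rw [Equiv.Perm.mem_alternatingGroup]
        show Equiv.Perm.sign ((SP A (m + 1)).symm.permCongr σ) = 1
        rw [Equiv.Perm.sign_permCongr]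
        exact Equiv.Perm.mem_alternatingGroup.mp hσ
      have hρG : ρ ∈ Subgroup.closure (Wset A (m + 2)) := by rw [IH]; exact hρA
      have hsub : (Subgroup.closure (Wset A (m + 2))).map (liftPerm (A := A) (m + 2)) ≤ G := by
        rw [MonoidHom.map_closure]
        apply Subgroup.closure_mono
        rintro _ ⟨p, ⟨i, hi, π, hπ, rfl⟩, rfl⟩
        exact ⟨i, by omega, π, hπ, liftPerm_window (m + 2) i hi π⟩
      have hlift : liftPerm (m + 2) ρ ∈ G := hsub (Subgroup.mem_map_of_mem _ hρG)
      refine Subgroup.mem_map.mpr ⟨liftPerm (m + 2) ρ, hlift, ?_⟩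
      apply Equiv.ext
      intro z
      show E3 A m ((SP A (m + 2)).symm
        ((ρ.prodCongr (Equiv.refl A)) (SP A (m + 2) ((E3 A m).symm z)))) =
        (σ.prodCongr (Equiv.refl A)) z
      rw [show (E3 A m).symm z =
        (SP A (m + 2)).symm (((SP A (m + 1)).prodCongr (Equiv.refl A)).symm z) from rfl,
        Equiv.apply_symm_apply]
      show ((SP A (m + 1)).prodCongr (Equiv.refl A))
        (SP A (m + 2) ((SP A (m + 2)).symm
          ((ρ.prodCongr (Equiv.refl A))
            (((SP A (m + 1)).prodCongr (Equiv.refl A)).symm z)))) = _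
      rw [Equiv.apply_symm_apply]
      show ((SP A (m + 1)) (ρ ((SP A (m + 1)).symm z.1)), z.2) = (σ z.1, z.2)
      rw [show ρ ((SP A (m + 1)).symm z.1) =
        (SP A (m + 1)).symm (σ ((SP A (m + 1)) ((SP A (m + 1)).symm z.1))) from rfl,
        Equiv.apply_symm_apply, Equiv.apply_symm_apply]
    have hT : ∀ τ ∈ alternatingGroup (A × A), (Tp τ : Perm (((Fin (m+1) → A) × A) × A)) ∈
        G.map M.toMonoidHom := by
      intro τ hτ
      exact Subgroup.mem_map.mpr ⟨window (m + 3) (m + 1) (by omega) τ,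
        Subgroup.subset_closure ⟨m + 1, by omega, τ, hτ, rfl⟩, windowTop m τ⟩
    have hkey := key hY (by omega) (by omega) (G.map M.toMonoidHom) hF hT
    intro x hx
    have hMx : M x ∈ alternatingGroup (((Fin (m + 1) → A) × A) × A) := by
      rw [Equiv.Perm.mem_alternatingGroup]
      show Equiv.Perm.sign ((E3 A m).permCongr x) = 1
      rw [Equiv.Perm.sign_permCongr]
      exact Equiv.Perm.mem_alternatingGroup.mp hx
    obtain ⟨g, hgG, hgx⟩ := Subgroup.mem_map.mp (hkey hMx)
    have hgeq : g = x := M.injective hgx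
    rwa [hgeq] at hgG

end Main

/-- for `|A| ≥ 3` and `n ≥ 2`, the permutations of `Fin n → A` applying an even
permutation of `A × A` to two adjacent coordinates generate the alternating group on
`Fin n → A`. -/
theorem stmt5 (A : Type) [Fintype A] [DecidableEq A] (hA : 3 ≤ Fintype.card A)
    (n : ℕ) (hn : 2 ≤ n)
    (g : ∀ i : ℕ, i + 1 < n → Equiv.Perm (A × A) → Equiv.Perm (Fin n → A))
    (hg : ∀ (i : ℕ) (hi : i + 1 < n) (π : Equiv.Perm (A × A)) (w : Fin n → A) (j : Fin n),
      g i hi π w j =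
        if j = (⟨i, by omega⟩ : Fin n) then (π (w ⟨i, by omega⟩, w ⟨i + 1, hi⟩)).1
        else if j = (⟨i + 1, hi⟩ : Fin n) then (π (w ⟨i, by omega⟩, w ⟨i + 1, hi⟩)).2
        else w j) :
    Subgroup.closure {p : Equiv.Perm (Fin n → A) |
        ∃ (i : ℕ) (hi : i + 1 < n) (π : Equiv.Perm (A × A)),
          π ∈ alternatingGroup (A × A) ∧ p = g i hi π} =
      alternatingGroup (Fin n → A) := by
  obtain ⟨m, rfl⟩ : ∃ m, n = m + 2 := ⟨n - 2, by omega⟩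
  have hgw : ∀ (i : ℕ) (hi : i + 1 < m + 2) (π : Equiv.Perm (A × A)),
      g i hi π = window (m + 2) i hi π := by
    intro i hi π
    apply Equiv.ext
    intro w
    funext j
    rw [hg i hi π w j]
    show _ = windowFun (m + 2) i hi π w j
    unfold windowFun
    by_cases h1 : (j : ℕ) = i
    · rw [if_pos (Fin.ext h1), if_pos h1]
    · have hne1 : j ≠ (⟨i, by omega⟩ : Fin (m + 2)) := fun h => h1 (by rw [h])
      rw [if_neg hne1, if_neg h1]
      by_cases h2 : (j : ℕ) = i + 1
      · rw [if_pos (Fin.ext h2), if_pos h2]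
      · have hne2 : j ≠ (⟨i + 1, hi⟩ : Fin (m + 2)) := fun h => h2 (by rw [h])
        rw [if_neg hne2, if_neg h2]
  have hset : {p : Equiv.Perm (Fin (m + 2) → A) |
      ∃ (i : ℕ) (hi : i + 1 < m + 2) (π : Equiv.Perm (A × A)),
        π ∈ alternatingGroup (A × A) ∧ p = g i hi π} = Wset A (m + 2) := by
    ext p
    constructor
    · rintro ⟨i, hi, π, hπ, rfl⟩
      exact ⟨i, hi, π, hπ, hgw i hi π⟩
    · rintro ⟨i, hi, π, hπ, rfl⟩
      exact ⟨i, hi, π, hπ, (hgw i hi π).symm⟩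
  rw [hset, CT hA m]
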